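/- Let λ be a partition of length at most n and set k_i = λ_i + n − i for 1 ≤ i ≤ n. Then the product of the hook lengths of λ equals ∏_{i=1}^n k_i! / Δ(k_1, …, k_n), where Δ(k) = ∏_{i<j} (k_i − k_j). -/

import Mathlib

open Finset

/-- The product of the hook lengths of a partition with at most `n` parts,
given by the (weakly decreasing) row-length function `l`.  The hook length of
the (0-indexed) box `(i,j)` is `(l i - j - 1) + #{i' > i | l i' > j} + 1`
(arm + leg + 1). -/
def hookProd (n : ℕ) (l : ℕ → ℕ) : ℕ :=
  ∏ i ∈ Finset.range n, ∏ j ∈ Finset.range (l i),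
    (l i - j + ((Finset.Ico (i + 1) n).filter (fun i' => j < l i')).card)

lemma prod_Icc_one_id (k : ℕ) : (∏ x ∈ Finset.Icc 1 k, x) = k.factorial := by
  rw [← Finset.Ico_add_one_right_eq_Icc, Finset.prod_Ico_eq_prod_range]
  simp [add_comm, Finset.prod_range_add_one_eq_factorial k]

/-- Key combinatorial fact: the hooks of one row, together with the
differences `kᵢ - kⱼ` for rows `j` below, partition `{1, …, a + m}`. -/
lemma hook_key (a m : ℕ) (r : ℕ → ℕ) (hr : Antitone r) (hra : ∀ t, r t ≤ a) :
    (∏ j ∈ Finset.range a, (a - j + ((Finset.range m).filter (fun t => j < r t)).card)) *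
      (∏ t ∈ Finset.range m, (a - r t + t + 1)) = (a + m).factorial := by
  set c : ℕ → ℕ := fun j => ((Finset.range m).filter (fun t => j < r t)).card with hc
  set h : ℕ → ℕ := fun j => a - j + c j with hh
  set d : ℕ → ℕ := fun t => a - r t + t + 1 with hd
  have hcmono : Antitone c := by
    intro j j' hjj'
    apply Finset.card_le_card
    intro t ht
    simp only [hc, Finset.mem_filter, Finset.mem_range] at *
    exact ⟨ht.1, lt_of_le_of_lt hjj' ht.2⟩
  have hcm : ∀ j, c j ≤ m := fun j => (Finset.card_filter_le _ _).trans (by simp)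
  have hinj : Set.InjOn h (Finset.range a) := by
    intro j hj j' hj' hEq
    simp only [Finset.coe_range, Set.mem_Iio] at hj hj'
    by_contra hne
    rcases Nat.lt_or_ge j j' with hlt | hge
    · have h1 : c j' ≤ c j := hcmono hlt.le
      have : h j' < h j := by simp only [hh]; omega
      omega
    · have hlt : j' < j := by omega
      have h1 : c j ≤ c j' := hcmono hlt.le
      have : h j < h j' := by simp only [hh]; omega
      omega
  have dinj : Set.InjOn d (Finset.range m) := by
    intro t ht t' ht' hEq
    by_contra hne
    rcases Nat.lt_or_ge t t' with hlt | hge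
    · have := hr hlt.le
      have : d t < d t' := by simp only [hd]; omega
      omega
    · have hlt : t' < t := by omega
      have := hr hlt.le
      have : d t' < d t := by simp only [hd]; omega
      omega
  have hmemh : ∀ j < a, h j ∈ Finset.Icc 1 (a + m) := by
    intro j hj
    have := hcm j
    simp only [hh, Finset.mem_Icc]; omega
  have hmemd : ∀ t < m, d t ∈ Finset.Icc 1 (a + m) := by
    intro t ht
    have := hra t
    simp only [hd, Finset.mem_Icc]; omega
  have hdisj : Disjoint ((Finset.range a).image h) ((Finset.range m).image d) := by
    rw [Finset.disjoint_left]
    rintro x hx hx'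
    simp only [Finset.mem_image, Finset.mem_range] at hx hx'
    obtain ⟨j, hj, rfl⟩ := hx
    obtain ⟨t, ht, hEq⟩ := hx'
    rcases Nat.lt_or_ge j (r t) with hcase | hcase
    · have hsub : Finset.range (t + 1) ⊆ (Finset.range m).filter (fun t' => j < r t') := by
        intro t' ht'
        simp only [Finset.mem_range] at ht'
        simp only [Finset.mem_filter, Finset.mem_range]
        have : r t ≤ r t' := hr (by omega)
        exact ⟨by omega, by omega⟩
      have h1 : t + 1 ≤ c j := by
        simpa using Finset.card_le_card hsub
      have h2 := hra t
      simp only [hh, hd] at hEq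
      omega
    · have hsub : (Finset.range m).filter (fun t' => j < r t') ⊆ Finset.range t := by
        intro t' ht'
        simp only [Finset.mem_filter, Finset.mem_range] at ht'
        simp only [Finset.mem_range]
        by_contra hge'
        have : r t' ≤ r t := hr (by omega)
        omega
      have h1 : c j ≤ t := by simpa using Finset.card_le_card hsub
      simp only [hh, hd] at hEq
      omega
  have hunion : (Finset.range a).image h ∪ (Finset.range m).image d = Finset.Icc 1 (a + m) := by
    apply Finset.eq_of_subset_of_card_le
    · intro x hx
      rcases Finset.mem_union.mp hx with hx | hx <;>
      · simp only [Finset.mem_image, Finset.mem_range] at hx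
        obtain ⟨y, hy, rfl⟩ := hx
        first
        | exact hmemh y hy
        | exact hmemd y hy
    · rw [Finset.card_union_of_disjoint hdisj, Finset.card_image_of_injOn hinj,
        Finset.card_image_of_injOn dinj]
      simp
  calc (∏ j ∈ Finset.range a, h j) * (∏ t ∈ Finset.range m, d t)
      = (∏ x ∈ (Finset.range a).image h, x) * (∏ x ∈ (Finset.range m).image d, x) := by
        rw [Finset.prod_image (fun x hx y hy => hinj (by simpa using hx) (by simpa using hy)),
          Finset.prod_image (fun x hx y hy => dinj (by simpa using hx) (by simpa using hy))]
    _ = ∏ x ∈ (Finset.range a).image h ∪ (Finset.range m).image d, x := by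
        rw [Finset.prod_union hdisj]
    _ = (a + m).factorial := by rw [hunion, prod_Icc_one_id]

/-- Per-row version: hooks of row `i` times the differences equal `kᵢ!`. -/
lemma hook_row (n : ℕ) (l : ℕ → ℕ) (hmono : Antitone l) (i : ℕ) (hi : i < n) :
    (∏ j ∈ Finset.range (l i), (l i - j + ((Finset.Ico (i+1) n).filter (fun i' => j < l i')).card)) *
      (∏ j ∈ Finset.Ico (i+1) n, ((l i + (n-1-i)) - (l j + (n-1-j)))) =
      (l i + (n-1-i)).factorial := by
  have hk := hook_key (l i) (n-1-i) (fun t => l (i+1+t))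
    (fun t t' htt' => hmono (by omega)) (fun t => hmono (by omega))
  have h1 : ∀ j, ((Finset.Ico (i+1) n).filter (fun i' => j < l i')).card
      = ((Finset.range (n-1-i)).filter (fun t => j < l (i+1+t))).card := by
    intro j
    rw [Finset.card_filter, Finset.card_filter, Finset.sum_Ico_eq_sum_range]
    have : n - (i+1) = n - 1 - i := by omega
    rw [this]
  have h2 : (∏ j ∈ Finset.Ico (i+1) n, ((l i + (n-1-i)) - (l j + (n-1-j))))
      = ∏ t ∈ Finset.range (n-1-i), (l i - l (i+1+t) + t + 1) := by
    rw [Finset.prod_Ico_eq_prod_range]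
    have : n - (i+1) = n - 1 - i := by omega
    rw [this]
    apply Finset.prod_congr rfl
    intro t ht
    simp only [Finset.mem_range] at ht
    have hle : l (i+1+t) ≤ l i := hmono (by omega)
    omega
  rw [h2]
  simp only [h1]
  exact hk

lemma fin_Ioi_prod {M : Type*} [CommMonoid M] {n : ℕ} (i : Fin n) (f : ℕ → M) :
    ∏ j ∈ Finset.Ioi i, f (j : ℕ) = ∏ j ∈ Finset.Ico ((i : ℕ) + 1) n, f j := by
  have h1 : ∏ j ∈ Finset.Ioi i, f (j : ℕ)
      = ∏ j ∈ (Finset.Ioi i).map Fin.valEmbedding, f j := by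
    rw [Finset.prod_map]; rfl
  rw [h1, Fin.map_valEmbedding_Ioi]
  congr 1

/-- hook length formula: for a partition `λ` of length at most
`n` and `kᵢ = λᵢ + n - i`, the product of the hook lengths of `λ` equals
`∏ᵢ kᵢ! / Δ(k)` where `Δ(k) = ∏_{i<j} (kᵢ - kⱼ)`. -/
theorem stmt6 (n : ℕ) (l : ℕ → ℕ) (hmono : Antitone l)
    (hlen : ∀ i, n ≤ i → l i = 0) :
    (hookProd n l : ℚ) =
      (∏ i : Fin n, ((l i + (n - 1 - (i : ℕ))).factorial : ℚ)) /
        ∏ i : Fin n, ∏ j ∈ Finset.Ioi i,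
          (((l i + (n - 1 - (i : ℕ))) : ℚ) - ((l j + (n - 1 - (j : ℕ))) : ℚ)) := by
  set K : ℕ → ℕ := fun i => l i + (n - 1 - i) with hK
  -- the key positivity: K is strictly decreasing on range n
  have hKlt : ∀ i j : ℕ, i < j → j < n → K j < K i := by
    intro i j hij hj
    have := hmono hij.le
    simp only [hK]
    omega
  -- natural-number denominator
  set P : ℕ := ∏ i ∈ Finset.range n, ∏ j ∈ Finset.Ico (i+1) n, (K i - K j) with hP
  -- main natural number identity
  have hmain : hookProd n l * P = ∏ i ∈ Finset.range n, (K i).factorial := by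
    rw [hookProd, hP, ← Finset.prod_mul_distrib]
    apply Finset.prod_congr rfl
    intro i hi
    simp only [Finset.mem_range] at hi
    exact hook_row n l hmono i hi
  -- rewrite the denominator as a cast of P
  have hden : (∏ i : Fin n, ∏ j ∈ Finset.Ioi i,
      (((l i + (n - 1 - (i : ℕ))) : ℚ) - ((l j + (n - 1 - (j : ℕ))) : ℚ))) = (P : ℚ) := by
    rw [hP, Nat.cast_prod, ← Fin.prod_univ_eq_prod_range
      (fun i => ((∏ j ∈ Finset.Ico (i+1) n, (K i - K j) : ℕ) : ℚ))]
    apply Finset.prod_congr rfl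
    intro i _
    rw [fin_Ioi_prod i (fun j => ((l i + (n - 1 - (i : ℕ))) : ℚ) - ((l j + (n - 1 - j)) : ℚ)),
      Nat.cast_prod]
    apply Finset.prod_congr rfl
    intro j hj
    simp only [Finset.mem_Ico] at hj
    have hlt := hKlt i j (by omega) hj.2
    have hle : K j ≤ K i := hlt.le
    rw [Nat.cast_sub hle]
    simp only [hK]
    have hn1 : 1 ≤ n := by omega
    have hi1 : (i : ℕ) ≤ n - 1 := by omega
    have hj1 : j ≤ n - 1 := by omega
    have e1 : ((n - 1 - (i : ℕ) : ℕ) : ℚ) = (n : ℚ) - 1 - (i : ℕ) := by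
      rw [Nat.cast_sub hi1, Nat.cast_sub hn1]; norm_num
    have e2 : ((n - 1 - j : ℕ) : ℚ) = (n : ℚ) - 1 - j := by
      rw [Nat.cast_sub hj1, Nat.cast_sub hn1]; norm_num
    push_cast [e1, e2]
    ring
  have hPpos : 0 < P := by
    rw [hP]
    apply Finset.prod_pos
    intro i hi
    apply Finset.prod_pos
    intro j hj
    simp only [Finset.mem_range] at hi
    simp only [Finset.mem_Ico] at hj
    have := hKlt i j (by omega) hj.2
    omega
  rw [hden, eq_div_iff (by exact_mod_cast hPpos.ne')]
  rw [← Nat.cast_mul, hmain, Nat.cast_prod,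
    ← Fin.prod_univ_eq_prod_range (fun i => ((K i).factorial : ℚ))]
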